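/- Let N ≥ 1, let 0 < p ≤ 1, and let f, g ∈ L²(ℝ^N; ℂ). Then the functions |f|^p f and |g|^p g belong to L^{2/(p+1)}(ℝ^N; ℂ), and ‖ |f|^p f − |g|^p g ‖_{L^{2/(p+1)}} ≤ (p+1)(‖f‖_{L²}^p + ‖g‖_{L²}^p) ‖f − g‖_{L²}. In particular, the map f ↦ |f|^p f is continuous from L²(ℝ^N; ℂ) to L^{2/(p+1)}(ℝ^N; ℂ). -/

import Mathlib

open MeasureTheory Complex
open scoped ENNReal NNReal

lemma key_real {p : ℝ} (hp0 : 0 < p) (hp1 : p ≤ 1) {a b : ℝ} (hb : 0 ≤ b) (hba : b ≤ a) :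
    (a ^ p - b ^ p) * b ≤ p * a ^ p * (a - b) := by
  have ha : 0 ≤ a := hb.trans hba
  rcases eq_or_lt_of_le hb with rfl | hb'
  · simp only [mul_zero]
    have h0 : (0:ℝ) ≤ a ^ p := Real.rpow_nonneg ha p
    simp only [sub_zero]
    exact mul_nonneg (mul_nonneg hp0.le h0) ha
  · have hs : (-1:ℝ) ≤ (a - b)/b := by
      have : (0:ℝ) ≤ (a-b)/b := div_nonneg (by linarith) hb'.le
      linarith
    have hber := rpow_one_add_le_one_add_mul_self hs hp0.le hp1
    have h1 : 1 + (a - b)/b = a / b := by field_simp; ring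
    rw [h1, Real.div_rpow ha hb'.le] at hber
    have hbp : 0 < b ^ p := Real.rpow_pos_of_pos hb' p
    have hap : b ^ p ≤ a ^ p := Real.rpow_le_rpow hb'.le hba hp0.le
    have h2 : a ^ p ≤ (1 + p * ((a-b)/b)) * b ^ p := (div_le_iff₀ hbp).1 hber
    have h3 : (1 + p * ((a-b)/b)) * b ^ p * b = b ^ p * b + p * b ^ p * (a-b) := by
      field_simp
    nlinarith [mul_le_mul_of_nonneg_right h2 hb'.le,
      mul_le_mul_of_nonneg_right (mul_le_mul_of_nonneg_left hap hp0.le) (sub_nonneg.2 hba)]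

lemma key_pt_le {p : ℝ} (hp0 : 0 < p) (hp1 : p ≤ 1) (a b : ℂ) (hba : ‖b‖ ≤ ‖a‖) :
    ‖((‖a‖ ^ p : ℝ) : ℂ) * a - ((‖b‖ ^ p : ℝ) : ℂ) * b‖ ≤
      (p+1) * (‖a‖ ^ p + ‖b‖ ^ p) * ‖a - b‖ := by
  have hA : (0:ℝ) ≤ ‖a‖ := norm_nonneg a
  have hB : (0:ℝ) ≤ ‖b‖ := norm_nonneg b
  have hap : ‖b‖ ^ p ≤ ‖a‖ ^ p := Real.rpow_le_rpow hB hba hp0.le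
  have hd : ((‖a‖^p:ℝ):ℂ)*a - ((‖b‖^p:ℝ):ℂ)*b
      = ((‖a‖^p:ℝ):ℂ)*(a-b) + (((‖a‖^p - ‖b‖^p):ℝ):ℂ)*b := by
    push_cast; ring
  have h1 : ‖((‖a‖^p:ℝ):ℂ)*(a-b)‖ = ‖a‖^p * ‖a-b‖ := by
    rw [norm_mul, Complex.norm_real, Real.norm_eq_abs,
      _root_.abs_of_nonneg (Real.rpow_nonneg hA p)]
  have h2 : ‖(((‖a‖^p - ‖b‖^p):ℝ):ℂ)*b‖ = (‖a‖^p - ‖b‖^p) * ‖b‖ := by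
    rw [norm_mul, Complex.norm_real, Real.norm_eq_abs,
      _root_.abs_of_nonneg (sub_nonneg.2 hap)]
  have hsub : ‖a‖ - ‖b‖ ≤ ‖a - b‖ := norm_sub_norm_le a b
  have hkey := key_real hp0 hp1 hB hba
  have hAp : (0:ℝ) ≤ ‖a‖ ^ p := Real.rpow_nonneg hA p
  have hBp : (0:ℝ) ≤ ‖b‖ ^ p := Real.rpow_nonneg hB p
  calc ‖((‖a‖^p:ℝ):ℂ)*a - ((‖b‖^p:ℝ):ℂ)*b‖
      ≤ ‖((‖a‖^p:ℝ):ℂ)*(a-b)‖ + ‖(((‖a‖^p - ‖b‖^p):ℝ):ℂ)*b‖ := by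
        rw [hd]; exact norm_add_le _ _
    _ = ‖a‖^p * ‖a-b‖ + (‖a‖^p - ‖b‖^p) * ‖b‖ := by rw [h1, h2]
    _ ≤ ‖a‖^p * ‖a-b‖ + p * ‖a‖^p * (‖a‖ - ‖b‖) := by linarith
    _ ≤ ‖a‖^p * ‖a-b‖ + p * ‖a‖^p * ‖a-b‖ := by
        nlinarith [mul_le_mul_of_nonneg_left hsub (mul_nonneg hp0.le hAp)]
    _ ≤ (p+1) * (‖a‖ ^ p + ‖b‖ ^ p) * ‖a - b‖ := by
        nlinarith [mul_nonneg (mul_nonneg (by linarith : (0:ℝ) ≤ p+1) hBp) (norm_nonneg (a-b))]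

lemma key_pt {p : ℝ} (hp0 : 0 < p) (hp1 : p ≤ 1) (a b : ℂ) :
    ‖((‖a‖ ^ p : ℝ) : ℂ) * a - ((‖b‖ ^ p : ℝ) : ℂ) * b‖ ≤
      (p+1) * (‖a‖ ^ p + ‖b‖ ^ p) * ‖a - b‖ := by
  rcases le_total ‖b‖ ‖a‖ with h | h
  · exact key_pt_le hp0 hp1 a b h
  · have h2 := key_pt_le hp0 hp1 b a h
    rw [show ((‖a‖^p:ℝ):ℂ)*a - ((‖b‖^p:ℝ):ℂ)*b = -(((‖b‖^p:ℝ):ℂ)*b - ((‖a‖^p:ℝ):ℂ)*a) by ring,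
      norm_neg, norm_sub_rev a b]
    linarith


/-- for `0 < p ≤ 1` and `f, g ∈ L²(ℝ^N; ℂ)`, the functions `|f|^p f` and
`|g|^p g` belong to `L^{2/(p+1)}`, with the Lipschitz-type estimate
`‖|f|^p f − |g|^p g‖_{L^{2/(p+1)}} ≤ (p+1)(‖f‖₂^p + ‖g‖₂^p)‖f − g‖₂`. -/
theorem stmt6 {N : ℕ} (hN : 1 ≤ N) (p : ℝ) (hp0 : 0 < p) (hp1 : p ≤ 1)
    (f g : EuclideanSpace ℝ (Fin N) → ℂ)
    (hf : MemLp f 2 volume) (hg : MemLp g 2 volume) :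
    MemLp (fun x => ((‖f x‖ ^ p : ℝ) : ℂ) * f x)
      (ENNReal.ofReal (2/(p+1))) volume ∧
    MemLp (fun x => ((‖g x‖ ^ p : ℝ) : ℂ) * g x)
      (ENNReal.ofReal (2/(p+1))) volume ∧
    eLpNorm (fun x => ((‖f x‖ ^ p : ℝ) : ℂ) * f x -
        ((‖g x‖ ^ p : ℝ) : ℂ) * g x) (ENNReal.ofReal (2/(p+1))) volume ≤
      ENNReal.ofReal ((p+1) *
        ((eLpNorm f 2 volume).toReal ^ p + (eLpNorm g 2 volume).toReal ^ p) *
        (eLpNorm (f - g) 2 volume).toReal) := by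
  have hp1' : (0:ℝ) < p + 1 := by linarith
  set r := ENNReal.ofReal (2/(p+1)) with hr
  set q := ENNReal.ofReal (2/p) with hq
  -- membership
  have hmem : ∀ u : EuclideanSpace ℝ (Fin N) → ℂ, MemLp u 2 volume →
      MemLp (fun x => ((‖u x‖ ^ p : ℝ) : ℂ) * u x) r volume := by
    intro u hu
    have hsm : AEStronglyMeasurable (fun x => ((‖u x‖ ^ p : ℝ) : ℂ) * u x) volume :=
      (Complex.continuous_ofReal.comp_aestronglyMeasurable
        (hu.1.norm.aemeasurable.pow_const p).aestronglyMeasurable).mul hu.1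
    have hr2 : r = 2 / ENNReal.ofReal (p+1) := by
      rw [hr, ENNReal.ofReal_div_of_pos hp1']
      norm_num
    have hmaj := hu.norm_rpow_div (ENNReal.ofReal (p+1))
    rw [ENNReal.toReal_ofReal hp1'.le, ← hr2] at hmaj
    refine hmaj.of_le hsm (Filter.Eventually.of_forall fun x => ?_)
    have : ‖((‖u x‖ ^ p : ℝ) : ℂ) * u x‖ = ‖u x‖ ^ (p+1) := by
      rw [norm_mul, Complex.norm_real, Real.norm_eq_abs,
        _root_.abs_of_nonneg (Real.rpow_nonneg (norm_nonneg _) p)]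
      rcases eq_or_ne (‖u x‖) 0 with h0 | h0
      · rw [h0, Real.zero_rpow hp0.ne', Real.zero_rpow (by linarith), zero_mul]
      · rw [Real.rpow_add_one h0]
    rw [this, Real.norm_eq_abs, _root_.abs_of_nonneg (Real.rpow_nonneg (norm_nonneg _) _)]
  refine ⟨hmem f hf, hmem g hg, ?_⟩
  -- the estimate
  set φ : EuclideanSpace ℝ (Fin N) → ℝ := fun x => (p+1) * (‖f x‖ ^ p + ‖g x‖ ^ p) with hφ
  have hφm : AEStronglyMeasurable φ volume :=
    (((hf.1.norm.aemeasurable.pow_const p).add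
      (hg.1.norm.aemeasurable.pow_const p)).const_mul (p+1)).aestronglyMeasurable
  have hstep1 : eLpNorm (fun x => ((‖f x‖ ^ p : ℝ) : ℂ) * f x -
      ((‖g x‖ ^ p : ℝ) : ℂ) * g x) r volume ≤ eLpNorm (φ • (f - g)) r volume := by
    refine eLpNorm_mono_ae (Filter.Eventually.of_forall fun x => ?_)
    have h1 : (φ • (f - g)) x = φ x • (f x - g x) := rfl
    have hφx : 0 ≤ φ x := by
      have := Real.rpow_nonneg (norm_nonneg (f x)) p
      have := Real.rpow_nonneg (norm_nonneg (g x)) p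
      positivity
    rw [h1, norm_smul, Real.norm_eq_abs, _root_.abs_of_nonneg hφx]
    calc ‖((‖f x‖ ^ p : ℝ) : ℂ) * f x - ((‖g x‖ ^ p : ℝ) : ℂ) * g x‖
        ≤ (p+1) * (‖f x‖ ^ p + ‖g x‖ ^ p) * ‖f x - g x‖ := key_pt hp0 hp1 (f x) (g x)
      _ = φ x * ‖f x - g x‖ := by rw [hφ]
  have hpqr : 1/r = 1/q + 1/(2 : ENNReal) := by
    rw [hr, hq, one_div, one_div, one_div,
      ← ENNReal.ofReal_inv_of_pos (by positivity : (0:ℝ) < 2/(p+1)),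
      ← ENNReal.ofReal_inv_of_pos (by positivity : (0:ℝ) < 2/p),
      show ((2 : ENNReal))⁻¹ = ENNReal.ofReal 2⁻¹ by
        rw [ENNReal.ofReal_inv_of_pos two_pos]; norm_num,
      ← ENNReal.ofReal_add (by positivity) (by norm_num)]
    congr 1
    field_simp
  have hstep2 : eLpNorm (φ • (f - g)) r volume ≤
      eLpNorm φ q volume * eLpNorm (f - g) 2 volume :=
    eLpNorm_smul_le_mul_eLpNorm (hf.sub hg).1 hφm (hpqr := ⟨by simpa only [one_div] using hpqr.symm⟩)
  -- bound eLpNorm φ q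
  have hq1 : (1 : ENNReal) ≤ q := by
    rw [hq]
    rw [ENNReal.one_le_ofReal]
    rw [le_div_iff₀ hp0]
    linarith
  have hnr : ∀ u : EuclideanSpace ℝ (Fin N) → ℂ, MemLp u 2 volume →
      eLpNorm (fun x => ‖u x‖ ^ p) q volume = eLpNorm u 2 volume ^ p := by
    intro u hu
    rw [eLpNorm_norm_rpow u hp0]
    congr 1
    rw [hq, ← ENNReal.ofReal_mul (by positivity)]
    rw [div_mul_cancel₀ _ hp0.ne']
    norm_num
  have hstep3 : eLpNorm φ q volume ≤ ENNReal.ofReal (p+1) *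
      (eLpNorm f 2 volume ^ p + eLpNorm g 2 volume ^ p) := by
    have hsmul : φ = (p+1) • (fun x => ‖f x‖ ^ p + ‖g x‖ ^ p) := rfl
    rw [hsmul, eLpNorm_const_smul]
    have hc : ‖(p+1:ℝ)‖ₑ = ENNReal.ofReal (p+1) := by
      rw [Real.enorm_eq_ofReal hp1'.le]
    rw [hc]
    refine mul_le_mul_right ?_ _
    calc eLpNorm (fun x => ‖f x‖ ^ p + ‖g x‖ ^ p) q volume
        ≤ eLpNorm (fun x => ‖f x‖ ^ p) q volume + eLpNorm (fun x => ‖g x‖ ^ p) q volume :=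
          eLpNorm_add_le (hf.1.norm.aemeasurable.pow_const p).aestronglyMeasurable
            (hg.1.norm.aemeasurable.pow_const p).aestronglyMeasurable hq1
      _ = eLpNorm f 2 volume ^ p + eLpNorm g 2 volume ^ p := by
          rw [hnr f hf, hnr g hg]
  -- combine
  have hfin : eLpNorm (fun x => ((‖f x‖ ^ p : ℝ) : ℂ) * f x -
      ((‖g x‖ ^ p : ℝ) : ℂ) * g x) r volume ≤
      ENNReal.ofReal (p+1) * (eLpNorm f 2 volume ^ p + eLpNorm g 2 volume ^ p) *
        eLpNorm (f - g) 2 volume :=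
    hstep1.trans (hstep2.trans (mul_le_mul_left hstep3 _))
  refine hfin.trans (le_of_eq ?_)
  have hEf : eLpNorm f 2 volume ^ p = ENNReal.ofReal ((eLpNorm f 2 volume).toReal ^ p) := by
    rw [← ENNReal.ofReal_rpow_of_nonneg ENNReal.toReal_nonneg hp0.le,
      ENNReal.ofReal_toReal hf.2.ne]
  have hEg : eLpNorm g 2 volume ^ p = ENNReal.ofReal ((eLpNorm g 2 volume).toReal ^ p) := by
    rw [← ENNReal.ofReal_rpow_of_nonneg ENNReal.toReal_nonneg hp0.le,
      ENNReal.ofReal_toReal hg.2.ne]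
  have hEd : eLpNorm (f - g) 2 volume = ENNReal.ofReal ((eLpNorm (f - g) 2 volume).toReal) :=
    (ENNReal.ofReal_toReal (hf.sub hg).2.ne).symm
  rw [hEf, hEg, hEd, ← ENNReal.ofReal_add (by positivity) (by positivity),
    ← ENNReal.ofReal_mul hp1'.le, ← ENNReal.ofReal_mul (by positivity),
    ENNReal.toReal_ofReal ENNReal.toReal_nonneg]
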